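/- arXiv:0808.0783 — 4 statements merged into one kernel-verified Lean document; each statement's English description precedes it below -/
import Mathlib

section
/- Let n ≥ 1, ν > 0, let α₁ ≥ 1/(1+ν) with n + 2α₁ − 2 > 0, let 0 < ε < 1, and set A₁ = (2α₁(1−ε)(n+2α₁−2))^{−1/(1+ν)} and b₁ = 2(n+2α₁−2)ε if α₁ ≤ 1, and A₁ = (2α₁(1−ε)n)^{−1/(1+ν)} and b₁ = 2εn if α₁ > 1. Define ψ₁(x,t) = A₁(1+|x|²+b₁t)^{α₁}. Then Δψ₁(x,t) − ψ₁(x,t)^{−ν} − ∂ψ₁/∂t(x,t) ≥ 0 for all (x,t) ∈ ℝⁿ × (0,∞); i.e., ψ₁ is a subsolution of u_t = Δu − u^{−ν} on ℝⁿ × (0,∞). -/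
open MeasureTheory Real Set Filter Topology Metric

noncomputable section

/-- Euclidean space `ℝⁿ`. -/
abbrev E (n : ℕ) := EuclideanSpace ℝ (Fin n)

/-- Second partial derivative `∂²f/∂xᵢ∂xⱼ` of `f : ℝⁿ → ℝ`. -/
def pd2 {n : ℕ} (f : E n → ℝ) (i j : Fin n) (x : E n) : ℝ :=
  fderiv ℝ (fun y => fderiv ℝ f y (EuclideanSpace.single j (1 : ℝ))) x
    (EuclideanSpace.single i (1 : ℝ))

/-- Spatial Laplacian of `f : ℝⁿ → ℝ`. -/
def lap {n : ℕ} (f : E n → ℝ) (x : E n) : ℝ := ∑ i, pd2 f i i x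

/-- `u = u(x,t)` is of class `C^{2,1}` on a set `S ⊆ ℝⁿ × ℝ`: `u`, `∂u/∂t` and
all first and second spatial derivatives are continuous on `S`. -/
structure IsC21 {n : ℕ} (S : Set (E n × ℝ)) (u : E n → ℝ → ℝ) : Prop where
  cont : ContinuousOn (fun p : E n × ℝ => u p.1 p.2) S
  cont_t : ContinuousOn (fun p : E n × ℝ => deriv (u p.1) p.2) S
  cont_x : ∀ i : Fin n, ContinuousOn
    (fun p : E n × ℝ =>
      fderiv ℝ (fun y => u y p.2) p.1 (EuclideanSpace.single i (1 : ℝ))) S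
  cont_xx : ∀ i j : Fin n, ContinuousOn
    (fun p : E n × ℝ => pd2 (fun y => u y p.2) i j p.1) S

lemma hasFDerivAt_g {n : ℕ} (c : ℝ) (y : E n) :
    HasFDerivAt (fun y : E n => 1 + ‖y‖ ^ 2 + c) ((2:ℕ) • (innerSL ℝ y)) y := by
  have h : HasFDerivAt (fun y : E n => ‖y‖ ^ 2) ((2:ℕ) • (innerSL ℝ y)) y := by
    simpa using (hasFDerivAt_id y).norm_sq
  exact (h.const_add 1).add_const c

lemma g_pos {n : ℕ} {c : ℝ} (hc : 0 ≤ c) (y : E n) : 0 < 1 + ‖y‖ ^ 2 + c := by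
  positivity

lemma hasFDerivAt_F {n : ℕ} (A α c : ℝ) (hc : 0 ≤ c) (y : E n) :
    HasFDerivAt (fun y : E n => A * (1 + ‖y‖ ^ 2 + c) ^ α)
      (A • ((α * (1 + ‖y‖ ^ 2 + c) ^ (α - 1)) • ((2:ℕ) • (innerSL ℝ y)))) y := by
  exact ((hasFDerivAt_g c y).rpow_const (Or.inl (g_pos hc y).ne')).const_mul A

lemma first_partial {n : ℕ} (A α c : ℝ) (hc : 0 ≤ c) (j : Fin n) :
    (fun y : E n => fderiv ℝ (fun y : E n => A * (1 + ‖y‖ ^ 2 + c) ^ α) y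
        (EuclideanSpace.single j (1 : ℝ)))
      = fun y : E n => (2 * A * α) * ((1 + ‖y‖ ^ 2 + c) ^ (α - 1) * y j) := by
  funext y
  rw [(hasFDerivAt_F A α c hc y).fderiv]
  simp [EuclideanSpace.inner_single_right, real_inner_comm]
  ring

lemma pd2_diag {n : ℕ} (A α c : ℝ) (hc : 0 ≤ c) (i : Fin n) (x : E n) :
    pd2 (fun y : E n => A * (1 + ‖y‖ ^ 2 + c) ^ α) i i x
      = (2 * A * α) * ((1 + ‖x‖ ^ 2 + c) ^ (α - 1)
          + (α - 1) * (1 + ‖x‖ ^ 2 + c) ^ (α - 2) * (2 * x i ^ 2)) := by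
  unfold pd2
  rw [first_partial A α c hc i]
  have h1 : HasFDerivAt (fun y : E n => (1 + ‖y‖ ^ 2 + c) ^ (α - 1))
      (((α - 1) * (1 + ‖x‖ ^ 2 + c) ^ (α - 1 - 1)) • ((2:ℕ) • (innerSL ℝ x))) x :=
    (hasFDerivAt_g c x).rpow_const (Or.inl (g_pos hc x).ne')
  have h2 : HasFDerivAt (fun y : E n => y i) (EuclideanSpace.proj (𝕜 := ℝ) i) x :=
    (EuclideanSpace.proj (𝕜 := ℝ) i).hasFDerivAt
  have h3 := ((h1.mul h2).const_mul (2 * A * α))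
  rw [HasFDerivAt.fderiv (f := fun y : E n => 2 * A * α * ((1 + ‖y‖ ^ 2 + c) ^ (α - 1) * y i)) h3]
  have : α - 1 - 1 = α - 2 := by ring
  rw [this] at *
  simp [EuclideanSpace.inner_single_right, real_inner_comm, EuclideanSpace.single_apply]
  ring

lemma lap_eq {n : ℕ} (A α c : ℝ) (hc : 0 ≤ c) (x : E n) :
    lap (fun y : E n => A * (1 + ‖y‖ ^ 2 + c) ^ α) x
      = (2 * A * α) * ((n : ℝ) * (1 + ‖x‖ ^ 2 + c) ^ (α - 1)
          + 2 * (α - 1) * (1 + ‖x‖ ^ 2 + c) ^ (α - 2) * ‖x‖ ^ 2) := by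
  unfold lap
  have hsum : ∑ i, x i ^ 2 = ‖x‖ ^ 2 := by
    rw [← real_inner_self_eq_norm_sq]
    simp [PiLp.inner_apply, sq]
    rw [← sq, EuclideanSpace.norm_eq, Real.sq_sqrt (by positivity)]
    simp [sq]
  calc ∑ i, pd2 (fun y : E n => A * (1 + ‖y‖ ^ 2 + c) ^ α) i i x
      = ∑ i : Fin n, (2 * A * α) * ((1 + ‖x‖ ^ 2 + c) ^ (α - 1)
          + (α - 1) * (1 + ‖x‖ ^ 2 + c) ^ (α - 2) * (2 * x i ^ 2)) := by
        exact Finset.sum_congr rfl fun i _ => pd2_diag A α c hc i x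
    _ = _ := by
        generalize (1 + ‖x‖ ^ 2 + c) ^ (α - 1) = P
        generalize (1 + ‖x‖ ^ 2 + c) ^ (α - 2) = Q
        rw [← hsum, Finset.sum_congr rfl (fun i _ => by ring :
          ∀ i ∈ Finset.univ, 2 * A * α * (P + (α - 1) * Q * (2 * x i ^ 2))
          = 2 * A * α * P + (2 * A * α * (2 * (α - 1) * Q)) * x i ^ 2),
          Finset.sum_add_distrib, Finset.sum_const, ← Finset.mul_sum]
        simp [Finset.card_univ]
        ring

lemma deriv_time (A α b s t : ℝ) (hpos : 0 < 1 + s + b * t) :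
    deriv (fun t => A * (1 + s + b * t) ^ α) t
      = A * (b * α * (1 + s + b * t) ^ (α - 1)) := by
  have h : HasDerivAt (fun t : ℝ => 1 + s + b * t) b t := by
    simpa using ((hasDerivAt_id t).const_mul b).const_add (1 + s)
  exact ((h.rpow_const (Or.inl hpos.ne')).const_mul A).deriv

lemma key_coeff (K ν A : ℝ) (hK : 0 < K) (hν : 0 < ν)
    (hA : A = K ^ (-(1 / (1 + ν)))) : K * A = A ^ (-ν) := by
  have h1 : (0:ℝ) < 1 + ν := by linarith
  subst hA
  nth_rewrite 1 [← Real.rpow_one K]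
  rw [← Real.rpow_add hK, ← Real.rpow_mul hK.le]
  congr 1
  field_simp
  ring

/-- `ψ₁(x,t) = A₁(1+|x|²+b₁t)^{α₁}` is a subsolution of `u_t = Δu - u^{-ν}`. -/
theorem psi1_subsolution (n : ℕ) (hn : 1 ≤ n) (ν α₁ ε A₁ b₁ : ℝ) (hν : 0 < ν)
    (hα₁ : 1 / (1 + ν) ≤ α₁) (hdim : 0 < (n : ℝ) + 2 * α₁ - 2)
    (hε : 0 < ε) (hε1 : ε < 1)
    (hA₁ : α₁ ≤ 1 →
      A₁ = (2 * α₁ * (1 - ε) * ((n : ℝ) + 2 * α₁ - 2)) ^ (-(1 / (1 + ν))))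
    (hA₁' : 1 < α₁ → A₁ = (2 * α₁ * (1 - ε) * n) ^ (-(1 / (1 + ν))))
    (hb₁ : α₁ ≤ 1 → b₁ = 2 * ((n : ℝ) + 2 * α₁ - 2) * ε)
    (hb₁' : 1 < α₁ → b₁ = 2 * ε * n)
    (ψ₁ : E n → ℝ → ℝ)
    (hψ₁ : ∀ (x : E n) (t : ℝ), ψ₁ x t = A₁ * (1 + ‖x‖ ^ 2 + b₁ * t) ^ α₁) :
    ∀ (x : E n) (t : ℝ), 0 < t →
      0 ≤ lap (fun y => ψ₁ y t) x - ψ₁ x t ^ (-ν) - deriv (ψ₁ x) t := by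
  intro x t ht
  have hν1 : (0:ℝ) < 1 + ν := by linarith
  have hαpos : 0 < α₁ := lt_of_lt_of_le (by positivity) hα₁
  have hnpos : (0:ℝ) < n := by exact_mod_cast hn
  have hbpos : 0 < b₁ := by
    rcases le_or_gt α₁ 1 with h | h
    · rw [hb₁ h]; positivity
    · rw [hb₁' h]; positivity
  have hc : 0 ≤ b₁ * t := by positivity
  have hfun1 : (fun y => ψ₁ y t) = fun y : E n => A₁ * (1 + ‖y‖ ^ 2 + b₁ * t) ^ α₁ :=
    funext fun y => hψ₁ y t
  have hfun2 : (ψ₁ x) = fun t => A₁ * (1 + ‖x‖ ^ 2 + b₁ * t) ^ α₁ :=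
    funext fun t => hψ₁ x t
  have hw : 0 < 1 + ‖x‖ ^ 2 + b₁ * t := by positivity
  rw [hfun1, hfun2, lap_eq A₁ α₁ (b₁ * t) hc x, deriv_time A₁ α₁ b₁ (‖x‖ ^ 2) t hw]
  set w := 1 + ‖x‖ ^ 2 + b₁ * t with hwdef
  set S := ‖x‖ ^ 2 with hSdef
  have hw1 : 1 ≤ w := by nlinarith [sq_nonneg ‖x‖, mul_pos hbpos ht]
  have hSw : S ≤ w := by nlinarith [mul_pos hbpos ht]
  -- A₁ positivity
  have hK1pos : (0:ℝ) < 2 * α₁ * (1 - ε) * ((n : ℝ) + 2 * α₁ - 2) :=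
    mul_pos (mul_pos (by linarith) (by linarith)) hdim
  have hK2pos : (0:ℝ) < 2 * α₁ * (1 - ε) * (n : ℝ) :=
    mul_pos (mul_pos (by linarith) (by linarith)) hnpos
  have hApos : 0 < A₁ := by
    rcases le_or_gt α₁ 1 with h | h
    · rw [hA₁ h]; exact Real.rpow_pos_of_pos hK1pos _
    · rw [hA₁' h]; exact Real.rpow_pos_of_pos hK2pos _
  -- rewrite ψ^(-ν)
  have hpsipow : (A₁ * w ^ α₁) ^ (-ν) = A₁ ^ (-ν) * w ^ (α₁ * (-ν)) := by
    rw [Real.mul_rpow hApos.le (Real.rpow_nonneg hw.le α₁), Real.rpow_mul hw.le]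
  rw [hpsipow]
  set W1 := w ^ (α₁ - 1) with hW1def
  set W2 := w ^ (α₁ - 2) with hW2def
  set Wν := w ^ (α₁ * (-ν)) with hWνdef
  have hW1pos : 0 < W1 := Real.rpow_pos_of_pos hw _
  have hW2pos : 0 < W2 := Real.rpow_pos_of_pos hw _
  have hprod : W2 * w = W1 := by
    rw [hW1def, hW2def, show α₁ - 1 = (α₁ - 2) + 1 by ring, Real.rpow_add hw,
      Real.rpow_one]
  have hexp : Wν ≤ W1 := by
    apply Real.rpow_le_rpow_of_exponent_le hw1
    have : 1 ≤ α₁ * (1 + ν) := (div_le_iff₀ hν1).mp hα₁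
    nlinarith
  have hAν : 0 < A₁ ^ (-ν) := Real.rpow_pos_of_pos hApos _
  rcases le_or_gt α₁ 1 with h | h
  · have key : (2 * α₁ * (1 - ε) * ((n : ℝ) + 2 * α₁ - 2)) * A₁ = A₁ ^ (-ν) :=
      key_coeff _ ν A₁ hK1pos hν (hA₁ h)
    have hb := hb₁ h
    have hstep : 2 * (α₁ - 1) * W1 ≤ 2 * (α₁ - 1) * (W2 * S) := by
      nlinarith [mul_nonneg hW2pos.le (by linarith : (0:ℝ) ≤ w - S)]
    have hkey3 : A₁ * α₁ * (2 * ((n : ℝ) + 2 * α₁ - 2) - b₁) * W1 = A₁ ^ (-ν) * W1 := by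
      rw [hb, ← key]; ring
    have hAαstep : 0 ≤ A₁ * α₁ * (2 * (α₁ - 1) * (W2 * S) - 2 * (α₁ - 1) * W1) :=
      mul_nonneg (mul_pos hApos hαpos).le (by linarith)
    have hfin : 0 ≤ A₁ ^ (-ν) * (W1 - Wν) := mul_nonneg hAν.le (by linarith)
    linarith [hAαstep, hfin, hkey3]
  · have key : (2 * α₁ * (1 - ε) * (n : ℝ)) * A₁ = A₁ ^ (-ν) :=
      key_coeff _ ν A₁ hK2pos hν (hA₁' h)
    have hb := hb₁' h
    have hkey3 : A₁ * α₁ * (2 * (n : ℝ) - b₁) * W1 = A₁ ^ (-ν) * W1 := by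
      rw [hb, ← key]; ring
    have hpos2 : 0 ≤ A₁ * α₁ * (2 * (α₁ - 1) * (W2 * S)) := by
      have hS : (0:ℝ) ≤ S := by rw [hSdef]; positivity
      have h1 : (0:ℝ) ≤ α₁ - 1 := by linarith
      have h2 : 0 ≤ (α₁ - 1) * W2 * S := mul_nonneg (mul_nonneg h1 hW2pos.le) hS
      have h3 := mul_nonneg (mul_pos hApos hαpos).le h2
      linarith [h3]
    have hfin : 0 ≤ A₁ ^ (-ν) * (W1 - Wν) := mul_nonneg hAν.le (by linarith)
    linarith [hpos2, hfin, hkey3]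
end
end

section
/- Let n ≥ 1, ν > 0, let α₂ ≥ 1/(1+ν) and A₂ > 0, and set b₂ = 2n if α₂ ≤ 1 and b₂ = 2(n+2α₂−2) if α₂ > 1. Define ψ₂(x,t) = A₂(1+|x|²+b₂t)^{α₂}. Then Δψ₂(x,t) − ψ₂(x,t)^{−ν} − ∂ψ₂/∂t(x,t) ≤ 0 for all (x,t) ∈ ℝⁿ × (0,∞); i.e., ψ₂ is a supersolution of u_t = Δu − u^{−ν} on ℝⁿ × (0,∞). -/
open MeasureTheory Real Set Filter Topology Metric

noncomputable section

lemma hF_aux {n : ℕ} (c p : ℝ) (hc : 0 < c) (x : E n) :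
    HasFDerivAt (fun y : E n => (‖y‖ ^ 2 + c) ^ p)
      ((p * (‖x‖ ^ 2 + c) ^ (p - 1)) • (2 • innerSL ℝ x)) x := by
  have h1 : HasFDerivAt (fun y : E n => ‖y‖ ^ 2 + c) (2 • innerSL ℝ x) x :=
    (hasStrictFDerivAt_norm_sq x).hasFDerivAt.add_const c
  exact h1.rpow_const (Or.inl (by positivity))

lemma fderiv_app_aux {n : ℕ} (A c p : ℝ) (hc : 0 < c) (x : E n) (j : Fin n) :
    fderiv ℝ (fun y : E n => A * (‖y‖ ^ 2 + c) ^ p) x (EuclideanSpace.single j 1)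
      = (2 * A * p) * ((‖x‖ ^ 2 + c) ^ (p - 1) * x j) := by
  have h := ((hF_aux c p hc x).const_mul A).fderiv
  rw [h]
  have hx : (inner ℝ x (EuclideanSpace.single j (1:ℝ)) : ℝ) = x j := by
    rw [EuclideanSpace.inner_single_right]; simp
  simp [hx]
  ring

lemma pd2_diag_aux {n : ℕ} (A c p : ℝ) (hc : 0 < c) (x : E n) (j : Fin n) :
    pd2 (fun y : E n => A * (‖y‖ ^ 2 + c) ^ p) j j x
      = 2 * A * p * ((‖x‖ ^ 2 + c) ^ (p - 1)
          + (p - 1) * (‖x‖ ^ 2 + c) ^ (p - 2) * (2 * (x j) ^ 2)) := by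
  unfold pd2
  have hg : (fun y : E n => fderiv ℝ (fun z : E n => A * (‖z‖ ^ 2 + c) ^ p) y
      (EuclideanSpace.single j 1))
      = fun y => (2 * A * p) * ((‖y‖ ^ 2 + c) ^ (p - 1) * y j) :=
    funext fun y => fderiv_app_aux A c p hc y j
  rw [hg]
  have hproj : HasFDerivAt (fun y : E n => y j) (EuclideanSpace.proj (𝕜 := ℝ) j) x :=
    (EuclideanSpace.proj (𝕜 := ℝ) j).hasFDerivAt
  have hmul : HasFDerivAt (fun y : E n => (2 * A * p) * ((‖y‖ ^ 2 + c) ^ (p - 1) * y j)) _ x :=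
    ((hF_aux c (p - 1) hc x).mul hproj).const_mul (2 * A * p)
  rw [hmul.fderiv]
  have h1 : (inner ℝ x (EuclideanSpace.single j (1:ℝ)) : ℝ) = x j := by
    rw [EuclideanSpace.inner_single_right]; simp
  have h2 : (EuclideanSpace.proj (𝕜 := ℝ) j) (EuclideanSpace.single j (1:ℝ)) = 1 := by
    simp
  simp [h1, h2]
  rw [show p - 1 - 1 = p - 2 from by ring]
  ring

lemma norm_sq_sum_aux {n : ℕ} (x : E n) : ‖x‖ ^ 2 = ∑ j, (x j) ^ 2 := by
  rw [← real_inner_self_eq_norm_sq]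
  rw [PiLp.inner_apply]; simp [sq]

lemma lap_aux {n : ℕ} (A c p : ℝ) (hc : 0 < c) (x : E n) :
    lap (fun y : E n => A * (‖y‖ ^ 2 + c) ^ p) x
      = 2 * A * p * ((n : ℝ) * (‖x‖ ^ 2 + c) ^ (p - 1)
          + 2 * (p - 1) * (‖x‖ ^ 2 + c) ^ (p - 2) * ‖x‖ ^ 2) := by
  unfold lap
  have hs : ∀ j : Fin n, pd2 (fun y : E n => A * (‖y‖ ^ 2 + c) ^ p) j j x
      = 2 * A * p * ((‖x‖ ^ 2 + c) ^ (p - 1)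
          + (p - 1) * (‖x‖ ^ 2 + c) ^ (p - 2) * (2 * (x j) ^ 2)) :=
    fun j => pd2_diag_aux A c p hc x j
  simp only [hs]
  have h1 : ∑ j : Fin n, 2 * A * p * ((‖x‖ ^ 2 + c) ^ (p - 1)
        + (p - 1) * (‖x‖ ^ 2 + c) ^ (p - 2) * (2 * (x j) ^ 2))
      = ∑ j : Fin n, (2 * A * p * (‖x‖ ^ 2 + c) ^ (p - 1)
        + (4 * A * p * (p - 1) * (‖x‖ ^ 2 + c) ^ (p - 2)) * (x j) ^ 2) :=
    Finset.sum_congr rfl (fun j _ => by ring)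
  rw [h1, Finset.sum_add_distrib, Finset.sum_const, ← Finset.mul_sum, ← norm_sq_sum_aux x]
  simp only [Finset.card_univ, Fintype.card_fin, nsmul_eq_mul]
  ring

lemma deriv_time_aux (A K b p t : ℝ) (h : K + b * t ≠ 0) :
    deriv (fun s : ℝ => A * (K + b * s) ^ p) t
      = A * (b * p * (K + b * t) ^ (p - 1)) := by
  have h1 : HasDerivAt (fun s : ℝ => K + b * s) b t := by
    simpa using ((hasDerivAt_id t).const_mul b).const_add K
  have h2 := (h1.rpow_const (p := p) (Or.inl h)).const_mul A
  rw [h2.deriv]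

/-- `ψ₂(x,t) = A₂(1+|x|²+b₂t)^{α₂}` is a supersolution of `u_t = Δu - u^{-ν}`. -/
theorem psi2_supersolution (n : ℕ) (hn : 1 ≤ n) (ν α₂ A₂ b₂ : ℝ) (hν : 0 < ν)
    (hα₂ : 1 / (1 + ν) ≤ α₂) (hA₂ : 0 < A₂)
    (hb₂ : α₂ ≤ 1 → b₂ = 2 * n)
    (hb₂' : 1 < α₂ → b₂ = 2 * ((n : ℝ) + 2 * α₂ - 2))
    (ψ₂ : E n → ℝ → ℝ)
    (hψ₂ : ∀ (x : E n) (t : ℝ), ψ₂ x t = A₂ * (1 + ‖x‖ ^ 2 + b₂ * t) ^ α₂) :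
    ∀ (x : E n) (t : ℝ), 0 < t →
      lap (fun y => ψ₂ y t) x - ψ₂ x t ^ (-ν) - deriv (ψ₂ x) t ≤ 0 := by
  intro x t ht
  have hn' : (1 : ℝ) ≤ (n : ℝ) := by exact_mod_cast hn
  have hα0 : 0 < α₂ := lt_of_lt_of_le (by positivity) hα₂
  have hb : 0 < b₂ := by
    rcases le_or_gt α₂ 1 with h | h
    · rw [hb₂ h]; positivity
    · rw [hb₂' h]; nlinarith
  have hc : 0 < 1 + b₂ * t := by positivity
  have hw : 0 < ‖x‖ ^ 2 + (1 + b₂ * t) := by positivity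
  have hfx : (fun y => ψ₂ y t) = fun y : E n => A₂ * (‖y‖ ^ 2 + (1 + b₂ * t)) ^ α₂ := by
    funext y
    rw [hψ₂ y t, show 1 + ‖y‖ ^ 2 + b₂ * t = ‖y‖ ^ 2 + (1 + b₂ * t) from by ring]
  have hft : ψ₂ x = fun s : ℝ => A₂ * ((1 + ‖x‖ ^ 2) + b₂ * s) ^ α₂ := by
    funext s
    rw [hψ₂ x s, show 1 + ‖x‖ ^ 2 + b₂ * s = (1 + ‖x‖ ^ 2) + b₂ * s from by ring]
  have hKt : (1 + ‖x‖ ^ 2) + b₂ * t = ‖x‖ ^ 2 + (1 + b₂ * t) := by ring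
  have hψpos : 0 < ψ₂ x t ^ (-ν) := by
    rw [hψ₂ x t]
    have : 0 < A₂ * (1 + ‖x‖ ^ 2 + b₂ * t) ^ α₂ :=
      mul_pos hA₂ (Real.rpow_pos_of_pos (by positivity) _)
    exact Real.rpow_pos_of_pos this _
  have hd : deriv (ψ₂ x) t
      = A₂ * (b₂ * α₂ * (‖x‖ ^ 2 + (1 + b₂ * t)) ^ (α₂ - 1)) := by
    rw [hft, deriv_time_aux A₂ (1 + ‖x‖ ^ 2) b₂ α₂ t (by rw [hKt]; exact hw.ne'), hKt]
  have hl : lap (fun y => ψ₂ y t) x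
      = 2 * A₂ * α₂ * ((n : ℝ) * (‖x‖ ^ 2 + (1 + b₂ * t)) ^ (α₂ - 1)
          + 2 * (α₂ - 1) * (‖x‖ ^ 2 + (1 + b₂ * t)) ^ (α₂ - 2) * ‖x‖ ^ 2) := by
    rw [hfx]; exact lap_aux A₂ (1 + b₂ * t) α₂ hc x
  rw [hl, hd]
  set w : ℝ := ‖x‖ ^ 2 + (1 + b₂ * t) with hwdef
  have hP : 0 ≤ w ^ (α₂ - 1) := Real.rpow_nonneg hw.le _
  have hQ : 0 ≤ w ^ (α₂ - 2) := Real.rpow_nonneg hw.le _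
  have hPQ : w ^ (α₂ - 1) = w ^ (α₂ - 2) * w := by
    rw [show α₂ - 1 = (α₂ - 2) + 1 from by ring, Real.rpow_add_one hw.ne']
  have hs : (0 : ℝ) ≤ ‖x‖ ^ 2 := by positivity
  rcases le_or_gt α₂ 1 with hcase | hcase
  · rw [hb₂ hcase]
    have hkey : 2 * A₂ * α₂ * ((n : ℝ) * w ^ (α₂ - 1)
          + 2 * (α₂ - 1) * w ^ (α₂ - 2) * ‖x‖ ^ 2)
        - A₂ * (2 * (n : ℝ) * α₂ * w ^ (α₂ - 1))
        = (α₂ - 1) * (4 * A₂ * α₂ * (w ^ (α₂ - 2) * ‖x‖ ^ 2)) := by ring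
    have hnn : (α₂ - 1) * (4 * A₂ * α₂ * (w ^ (α₂ - 2) * ‖x‖ ^ 2)) ≤ 0 :=
      mul_nonpos_of_nonpos_of_nonneg (sub_nonpos.2 hcase)
        (mul_nonneg (by positivity) (mul_nonneg hQ hs))
    linarith [hkey, hnn, hψpos]
  · rw [hb₂' hcase]
    have hkey : 2 * A₂ * α₂ * ((n : ℝ) * w ^ (α₂ - 1)
          + 2 * (α₂ - 1) * w ^ (α₂ - 2) * ‖x‖ ^ 2)
        - A₂ * (2 * ((n : ℝ) + 2 * α₂ - 2) * α₂ * w ^ (α₂ - 1))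
        = -((α₂ - 1) * (4 * A₂ * α₂ * (w ^ (α₂ - 2) * (1 + b₂ * t)))) := by
      rw [hPQ, hwdef]; ring
    have hnn : 0 ≤ (α₂ - 1) * (4 * A₂ * α₂ * (w ^ (α₂ - 2) * (1 + b₂ * t))) :=
      mul_nonneg (sub_nonneg.2 hcase.le)
        (mul_nonneg (by positivity) (mul_nonneg hQ hc.le))
    linarith [hkey, hnn, hψpos]
end
end

section
/- Let n ≥ 1, 0 < ν ≤ 1, 0 < β ≤ 1/(1+ν) and T > 0. Define A₃ = (1+ν)^{1/(1+ν)} if 0 < β ≤ min((n−2)/2, 1/(1+ν)), and A₃ = ((1+ν)/(1 + 2β(1+ν)(2β+2−n)T))^{1/(1+ν)} if (n−2)/2 < β ≤ 1/(1+ν). Define ψ₃(x,t) = A₃(T−t)^{1/(1+ν)}(1+|x|²)^{−β}. Then Δψ₃(x,t) − ψ₃(x,t)^{−ν} − ∂ψ₃/∂t(x,t) ≤ 0 for all (x,t) ∈ ℝⁿ × (0,T); i.e., ψ₃ is a supersolution of u_t = Δu − u^{−ν} on ℝⁿ × (0,T). -/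
open MeasureTheory Real Set Filter Topology Metric

noncomputable section

set_option maxHeartbeats 1000000 in
lemma hpos {n : ℕ} (x : E n) : (0:ℝ) < 1 + ‖x‖^2 := by positivity

lemma L1 {n : ℕ} (c p : ℝ) (x : E n) :
    HasFDerivAt (fun y : E n => c * (1 + ‖y‖^2) ^ p)
      ((c * p * (1 + ‖x‖^2) ^ (p-1) * 2) • innerSL ℝ x) x := by
  have h0 : HasFDerivAt (fun y : E n => 1 + ‖y‖^2) ((2:ℕ) • innerSL ℝ x) x := by
    simpa using ((hasFDerivAt_id x).norm_sq.const_add 1)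
  have h2 := (h0.rpow_const (p := p) (Or.inl (hpos x).ne')).const_mul c
  refine h2.congr_fderiv ?_
  ext v
  simp [mul_smul]

lemma L1eval {n : ℕ} (c p : ℝ) (x : E n) (i : Fin n) :
    fderiv ℝ (fun y : E n => c * (1 + ‖y‖^2) ^ p) x (EuclideanSpace.single i 1)
      = c * p * 2 * ((1 + ‖x‖^2) ^ (p-1) * x i) := by
  rw [(L1 c p x).fderiv]
  simp [EuclideanSpace.inner_single_right, real_inner_comm]
  ring

lemma L2eval {n : ℕ} (K q : ℝ) (x : E n) (i : Fin n) :
    fderiv ℝ (fun y : E n => K * ((1 + ‖y‖^2) ^ q * y i)) x (EuclideanSpace.single i 1)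
      = K * (q * (1 + ‖x‖^2) ^ (q-1) * 2 * (x i * x i) + (1 + ‖x‖^2) ^ q) := by
  have ha : HasFDerivAt (fun y : E n => (1 + ‖y‖^2) ^ q)
      ((q * (1 + ‖x‖^2) ^ (q-1) * 2) • innerSL ℝ x) x := by
    simpa using L1 (n := n) 1 q x
  have hb : HasFDerivAt (fun y : E n => y i) (EuclideanSpace.proj (𝕜 := ℝ) i) x :=
    (EuclideanSpace.proj (𝕜 := ℝ) i).hasFDerivAt
  have hc : HasFDerivAt (fun y : E n => K * ((1 + ‖y‖^2) ^ q * y i)) _ x := (ha.mul hb).const_mul K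
  rw [hc.fderiv]
  simp [EuclideanSpace.inner_single_right, EuclideanSpace.single_apply]
  ring

lemma normsq_eq {n : ℕ} (x : E n) : ∑ i, x i * x i = ‖x‖^2 := by
  rw [← real_inner_self_eq_norm_sq]
  simp only [PiLp.inner_apply, RCLike.inner_apply, conj_trivial]

lemma lapEval {n : ℕ} (c p : ℝ) (x : E n) :
    lap (fun y : E n => c * (1 + ‖y‖^2) ^ p) x
      = c * p * 2 * ((p-1) * (1 + ‖x‖^2) ^ (p-2) * 2 * ‖x‖^2
          + n * (1 + ‖x‖^2) ^ (p-1)) := by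
  unfold lap pd2
  have key : ∀ i : Fin n,
      fderiv ℝ (fun y : E n => fderiv ℝ (fun z : E n => c * (1 + ‖z‖^2) ^ p) y
          (EuclideanSpace.single i 1)) x (EuclideanSpace.single i 1)
        = (c * p * 2) * ((p-1) * (1 + ‖x‖^2) ^ (p-1-1) * 2 * (x i * x i)
            + (1 + ‖x‖^2) ^ (p-1)) := by
    intro i
    have heq : (fun y : E n => fderiv ℝ (fun z : E n => c * (1 + ‖z‖^2) ^ p) y
        (EuclideanSpace.single i 1)) = fun y : E n => (c * p * 2) * ((1 + ‖y‖^2) ^ (p-1) * y i) :=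
      funext (fun y => L1eval c p y i)
    rw [heq, L2eval]
  simp_rw [key]
  rw [← Finset.mul_sum, Finset.sum_add_distrib, Finset.sum_const, ← Finset.mul_sum, normsq_eq,
    show p - 1 - 1 = p - 2 by ring]
  simp only [Finset.card_univ, Fintype.card_fin, nsmul_eq_mul]

set_option maxHeartbeats 1000000 in

lemma key_ineq (ν β T A₃ s h r2 nn : ℝ)
    (hν : 0 < ν) (hβ : 0 < β) (hβ' : β ≤ 1 / (1 + ν)) (hT : 0 < T)
    (hs : 0 < s) (hsT : s ≤ T) (hr2 : 0 ≤ r2) (hh : h = 1 + r2) (hnn : 1 ≤ nn)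
    (hA₃ : β ≤ (nn - 2) / 2 → A₃ = (1 + ν) ^ (1 / (1 + ν)))
    (hA₃' : (nn - 2) / 2 < β →
      A₃ = ((1 + ν) / (1 + 2 * β * (1 + ν) * (2 * β + 2 - nn) * T)) ^ (1 / (1 + ν))) :
    (A₃ * s ^ (1/(1+ν))) * (-β) * 2 * ((-β - 1) * h ^ (-β - 2) * 2 * r2
        + nn * h ^ (-β - 1))
      - A₃ ^ (-ν) * s ^ ((1/(1+ν)) * (-ν)) * h ^ ((-β) * (-ν))
      - A₃ * ((1/(1+ν)) * s ^ ((1/(1+ν)) - 1) * (-1)) * h ^ (-β) ≤ 0 := by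
  subst hh
  have hν2 : (0:ℝ) < 1 + ν := by linarith
  set a := 1/(1+ν) with ha_def
  have ha : 0 < a := by positivity
  have haa : a * (1 + ν) = 1 := by rw [ha_def]; field_simp
  have hexp : a * (-ν) = a - 1 := by nlinarith [haa]
  rw [hexp, show (-β) * (-ν) = β * ν by ring]
  have hhp : (0:ℝ) < 1 + r2 := by linarith
  have hh1 : (1:ℝ) ≤ 1 + r2 := by linarith
  have hsa1 : 0 < s ^ (a - 1) := Real.rpow_pos_of_pos hs _
  have hsa : 0 < s ^ a := Real.rpow_pos_of_pos hs _
  have hu : 0 < (1 + r2) ^ (-β - 2) := Real.rpow_pos_of_pos hhp _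
  have hwβ : (1 + r2) ^ (-β) ≤ 1 :=
    Real.rpow_le_one_of_one_le_of_nonpos hh1 (by linarith)
  have hwβν : 1 ≤ (1 + r2) ^ (β * ν) :=
    Real.one_le_rpow hh1 (by positivity)
  have hv : (1 + r2) ^ (-β - 1) = (1 + r2) * (1 + r2) ^ (-β - 2) := by
    rw [show -β - 1 = 1 + (-β - 2) by ring, Real.rpow_add hhp, Real.rpow_one]
  have hv1 : (1 + r2) ^ (-β - 1) ≤ 1 :=
    Real.rpow_le_one_of_one_le_of_nonpos hh1 (by linarith)
  have hsA : s ^ a = s * s ^ (a - 1) := by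
    have h0 := Real.rpow_add hs 1 (a - 1)
    rw [Real.rpow_one, show (1:ℝ) + (a - 1) = a by ring] at h0
    exact h0
  have hsT' : s ^ a ≤ T * s ^ (a - 1) := by
    rw [hsA]; exact mul_le_mul_of_nonneg_right hsT hsa1.le
  rcases le_or_gt β ((nn - 2) / 2) with hc | hc
  · -- case 1 : β ≤ (n-2)/2
    have hA := hA₃ hc
    have hApos : 0 < A₃ := by rw [hA]; positivity
    have hAν : A₃ ^ (-ν) = A₃ * a := by
      rw [hA, ← Real.rpow_mul hν2.le, hexp, Real.rpow_sub hν2, Real.rpow_one, ha_def,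
        eq_comm, mul_one_div]
    rw [hAν]
    have hΔ : (-β) * 2 * ((-β - 1) * (1 + r2) ^ (-β - 2) * 2 * r2
        + nn * (1 + r2) ^ (-β - 1)) ≤ 0 := by
      rw [hv]
      have e1 : (-β) * 2 * ((-β - 1) * (1 + r2) ^ (-β - 2) * 2 * r2
          + nn * ((1 + r2) * (1 + r2) ^ (-β - 2)))
          = 2 * β * (2 * β + 2 - nn) * ((1 + r2) ^ (-β - 2) * r2)
            - 2 * β * nn * (1 + r2) ^ (-β - 2) := by ring
      have e2 : 2 * β * (2 * β + 2 - nn) * ((1 + r2) ^ (-β - 2) * r2) ≤ 0 :=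
        mul_nonpos_of_nonpos_of_nonneg (by nlinarith) (mul_nonneg hu.le hr2)
      have e3 : 0 ≤ 2 * β * nn * (1 + r2) ^ (-β - 2) := by positivity
      linarith
    have t1 : (A₃ * s ^ a) * ((-β) * 2 * ((-β - 1) * (1 + r2) ^ (-β - 2) * 2 * r2
        + nn * (1 + r2) ^ (-β - 1))) ≤ 0 :=
      mul_nonpos_of_nonneg_of_nonpos (mul_pos hApos hsa).le hΔ
    have t2 : A₃ * a * s ^ (a - 1) * (1 + r2) ^ (-β)
        ≤ A₃ * a * s ^ (a - 1) * (1 + r2) ^ (β * ν) :=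
      mul_le_mul_of_nonneg_left (hwβ.trans hwβν) (by positivity)
    linarith [t1, t2]
  · -- case 2 : (n-2)/2 < β
    have hK : (0:ℝ) < 2 * β + 2 - nn := by linarith
    have hA := hA₃' hc
    have hD : (0:ℝ) < 1 + 2 * β * (1 + ν) * (2 * β + 2 - nn) * T := by
      have := mul_pos (mul_pos (mul_pos (by linarith : (0:ℝ) < 2 * β) hν2) hK) hT
      linarith
    have hR : 0 < (1 + ν) / (1 + 2 * β * (1 + ν) * (2 * β + 2 - nn) * T) := div_pos hν2 hD
    have hApos : 0 < A₃ := by rw [hA]; exact Real.rpow_pos_of_pos hR _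
    have hAν : A₃ ^ (-ν) = A₃ * (a + 2 * β * (2 * β + 2 - nn) * T) := by
      rw [hA, ← Real.rpow_mul hR.le, hexp, Real.rpow_sub hR, Real.rpow_one,
        div_div_eq_mul_div, mul_div_assoc]
      congr 1
      rw [ha_def]
      field_simp
    rw [hAν]
    have hruh : (1 + r2) ^ (-β - 2) * r2 ≤ 1 := by
      have h1 : (1 + r2) ^ (-β - 2) * r2 ≤ (1 + r2) * (1 + r2) ^ (-β - 2) := by
        nlinarith [hu]
      calc (1 + r2) ^ (-β - 2) * r2 ≤ (1 + r2) * (1 + r2) ^ (-β - 2) := h1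
        _ = (1 + r2) ^ (-β - 1) := hv.symm
        _ ≤ 1 := hv1
    have hΔ : (-β) * 2 * ((-β - 1) * (1 + r2) ^ (-β - 2) * 2 * r2
        + nn * (1 + r2) ^ (-β - 1)) ≤ 2 * β * (2 * β + 2 - nn) := by
      rw [hv]
      have e1 : (-β) * 2 * ((-β - 1) * (1 + r2) ^ (-β - 2) * 2 * r2
          + nn * ((1 + r2) * (1 + r2) ^ (-β - 2)))
          = 2 * β * (2 * β + 2 - nn) * ((1 + r2) ^ (-β - 2) * r2)
            - 2 * β * nn * (1 + r2) ^ (-β - 2) := by ring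
      have e2 : 2 * β * (2 * β + 2 - nn) * ((1 + r2) ^ (-β - 2) * r2)
          ≤ 2 * β * (2 * β + 2 - nn) * 1 := by
        apply mul_le_mul_of_nonneg_left hruh
        nlinarith
      have e3 : 0 ≤ 2 * β * nn * (1 + r2) ^ (-β - 2) := by positivity
      linarith
    have t1a : A₃ * s ^ a ≤ A₃ * (T * s ^ (a - 1)) :=
      mul_le_mul_of_nonneg_left hsT' hApos.le
    have t1 : (A₃ * s ^ a) * ((-β) * 2 * ((-β - 1) * (1 + r2) ^ (-β - 2) * 2 * r2
        + nn * (1 + r2) ^ (-β - 1)))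
        ≤ (A₃ * (T * s ^ (a - 1))) * (2 * β * (2 * β + 2 - nn)) := by
      calc (A₃ * s ^ a) * ((-β) * 2 * ((-β - 1) * (1 + r2) ^ (-β - 2) * 2 * r2
            + nn * (1 + r2) ^ (-β - 1)))
          ≤ (A₃ * s ^ a) * (2 * β * (2 * β + 2 - nn)) :=
            mul_le_mul_of_nonneg_left hΔ (by positivity)
        _ ≤ (A₃ * (T * s ^ (a - 1))) * (2 * β * (2 * β + 2 - nn)) :=
            mul_le_mul_of_nonneg_right t1a (by positivity)
    have t2 : A₃ * a * s ^ (a - 1) * (1 + r2) ^ (-β) ≤ A₃ * a * s ^ (a - 1) := by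
      have h0 := mul_le_mul_of_nonneg_left hwβ
        (show (0:ℝ) ≤ A₃ * a * s ^ (a - 1) by positivity)
      linarith [h0]
    have t3 : A₃ * (a + 2 * β * (2 * β + 2 - nn) * T) * s ^ (a - 1)
        ≤ A₃ * (a + 2 * β * (2 * β + 2 - nn) * T) * s ^ (a - 1) * (1 + r2) ^ (β * ν) := by
      have h0 := mul_le_mul_of_nonneg_left hwβν
        (show (0:ℝ) ≤ A₃ * (a + 2 * β * (2 * β + 2 - nn) * T) * s ^ (a - 1) by positivity)
      linarith [h0]
    linarith [t1, t2, t3]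

/-- `ψ₃(x,t) = A₃(T-t)^{1/(1+ν)}(1+|x|²)^{-β}` is a supersolution of
`u_t = Δu - u^{-ν}` on `ℝⁿ × (0,T)`. -/
theorem psi3_supersolution (n : ℕ) (hn : 1 ≤ n) (ν β T A₃ : ℝ)
    (hν : 0 < ν) (hν1 : ν ≤ 1) (hβ : 0 < β) (hβ' : β ≤ 1 / (1 + ν)) (hT : 0 < T)
    (hA₃ : β ≤ min (((n : ℝ) - 2) / 2) (1 / (1 + ν)) →
      A₃ = (1 + ν) ^ (1 / (1 + ν)))
    (hA₃' : ((n : ℝ) - 2) / 2 < β →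
      A₃ = ((1 + ν) / (1 + 2 * β * (1 + ν) * (2 * β + 2 - n) * T)) ^ (1 / (1 + ν)))
    (ψ₃ : E n → ℝ → ℝ)
    (hψ₃ : ∀ (x : E n) (t : ℝ),
      ψ₃ x t = A₃ * (T - t) ^ (1 / (1 + ν)) * (1 + ‖x‖ ^ 2) ^ (-β)) :
    ∀ (x : E n), ∀ t ∈ Ioo (0 : ℝ) T,
      lap (fun y => ψ₃ y t) x - ψ₃ x t ^ (-ν) - deriv (ψ₃ x) t ≤ 0 := by
  intro x t ht
  obtain ⟨ht0, htT⟩ := ht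
  have hs : 0 < T - t := by linarith
  have hsT : T - t ≤ T := by linarith
  have hν2 : (0:ℝ) < 1 + ν := by linarith
  have hApos : 0 < A₃ := by
    rcases le_or_gt β (((n:ℝ) - 2) / 2) with hc | hc
    · rw [hA₃ (le_min hc hβ')]; positivity
    · rw [hA₃' hc]
      apply Real.rpow_pos_of_pos
      apply div_pos (by linarith)
      have hK : (0:ℝ) < 2 * β + 2 - (n:ℝ) := by linarith
      have := mul_pos (mul_pos (mul_pos (by linarith : (0:ℝ) < 2 * β) hν2) hK) hT
      linarith
  have hfun : (fun y : E n => ψ₃ y t)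
      = fun y : E n => (A₃ * (T - t) ^ (1/(1+ν))) * (1 + ‖y‖^2) ^ (-β) := by
    funext y; rw [hψ₃ y t]
  rw [hfun, lapEval]
  have hx2 : ψ₃ x = fun r : ℝ => A₃ * (T - r) ^ (1/(1+ν)) * (1 + ‖x‖^2) ^ (-β) :=
    funext fun r => hψ₃ x r
  have h1 : HasDerivAt (fun r : ℝ => T - r) (-1) t := by
    simpa using (hasDerivAt_id t).const_sub T
  have hd : HasDerivAt (fun r : ℝ => A₃ * (T - r) ^ (1/(1+ν)) * (1 + ‖x‖^2) ^ (-β))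
      (A₃ * (-1 * (1/(1+ν)) * (T - t) ^ ((1/(1+ν)) - 1)) * (1 + ‖x‖^2) ^ (-β)) t :=
    ((h1.rpow_const (Or.inl hs.ne')).const_mul A₃).mul_const _
  rw [hx2, hd.deriv]
  beta_reduce
  rw [Real.mul_rpow (by positivity) (by positivity),
    Real.mul_rpow hApos.le (by positivity),
    ← Real.rpow_mul hs.le,
    ← Real.rpow_mul (by positivity : (0:ℝ) ≤ 1 + ‖x‖^2)]
  have hkey := key_ineq ν β T A₃ (T - t) (1 + ‖x‖^2) (‖x‖^2) n hν hβ hβ' hT hs hsT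
    (by positivity) rfl (by exact_mod_cast hn)
    (fun hcc => hA₃ (le_min hcc hβ')) hA₃'
  linarith [hkey]
end
end

section
/- Let n ≥ 1, ν > 0, T > 0, and let A be a constant with 0 < A < ((1+ν)/(2n))^{1/(1+ν)}. Set b = (1+ν)/A^{1+ν} − 2n, which is positive. Define ψ₅(x,t) = A(b(T−t)+|x|²)^{1/(1+ν)}. Then Δψ₅(x,t) − ψ₅(x,t)^{−ν} − ∂ψ₅/∂t(x,t) ≤ 0 for all (x,t) ∈ ℝⁿ × (0,T); i.e., ψ₅ is a supersolution of u_t = Δu − u^{−ν} on ℝⁿ × (0,T). -/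
open MeasureTheory Real Set Filter Topology Metric

noncomputable section

private lemma proj_hasFDerivAt {n : ℕ} (j : Fin n) (x : E n) :
    HasFDerivAt (𝕜 := ℝ) (fun z : E n => z j) (EuclideanSpace.proj j) x := by
  simpa using (EuclideanSpace.proj (𝕜 := ℝ) j).hasFDerivAt (x := x)

private lemma hasFDerivAt_w {n : ℕ} (c : ℝ) (y : E n) :
    HasFDerivAt (fun z : E n => c + ‖z‖ ^ 2) ((2 : ℝ) • (innerSL ℝ y)) y := by
  have h := ((hasStrictFDerivAt_norm_sq y).hasFDerivAt).const_add c
  refine h.congr_fderiv ?_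
  ext v
  simp [two_smul]

private lemma hasFDerivAt_pow_normsq {n : ℕ} (c α : ℝ) (hc : 0 < c) (y : E n) :
    HasFDerivAt (fun z : E n => (c + ‖z‖ ^ 2) ^ α)
      ((2 * α * (c + ‖y‖ ^ 2) ^ (α - 1)) • (innerSL ℝ y)) y := by
  have hpos : (0 : ℝ) < c + ‖y‖ ^ 2 := by positivity
  have h := (hasFDerivAt_w c y).rpow_const (p := α) (Or.inl hpos.ne')
  refine h.congr_fderiv ?_
  ext v
  simp only [ContinuousLinearMap.coe_smul', Pi.smul_apply, smul_eq_mul, two_smul,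
    ContinuousLinearMap.add_apply]
  ring

private lemma fderiv_eval {n : ℕ} (A c α : ℝ) (hc : 0 < c) (y : E n) (j : Fin n) :
    fderiv ℝ (fun z : E n => A * (c + ‖z‖ ^ 2) ^ α) y (EuclideanSpace.single j (1 : ℝ))
      = 2 * A * α * ((c + ‖y‖ ^ 2) ^ (α - 1) * y j) := by
  have h := (hasFDerivAt_pow_normsq c α hc y).const_mul A
  rw [h.fderiv]
  simp [smul_smul, EuclideanSpace.inner_single_right]
  ring

private lemma pd2_eval {n : ℕ} (A c α : ℝ) (hc : 0 < c) (x : E n) (j : Fin n) :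
    pd2 (fun z : E n => A * (c + ‖z‖ ^ 2) ^ α) j j x
      = 2 * A * α * (c + ‖x‖ ^ 2) ^ (α - 1)
        + (4 * A * α * (α - 1) * (c + ‖x‖ ^ 2) ^ (α - 2)) * (x j) ^ 2 := by
  unfold pd2
  have hfun : (fun y : E n =>
      fderiv ℝ (fun z : E n => A * (c + ‖z‖ ^ 2) ^ α) y (EuclideanSpace.single j (1 : ℝ)))
      = fun y : E n => 2 * A * α * ((c + ‖y‖ ^ 2) ^ (α - 1) * y j) :=
    funext fun y => fderiv_eval A c α hc y j
  rw [hfun]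
  have h1 : HasFDerivAt (fun z : E n => (c + ‖z‖ ^ 2) ^ (α - 1))
      ((2 * (α - 1) * (c + ‖x‖ ^ 2) ^ (α - 2)) • (innerSL ℝ x)) x := by
    have h := hasFDerivAt_pow_normsq c (α - 1) hc x
    have e : α - 1 - 1 = α - 2 := by ring
    rwa [e] at h
  have h2 := proj_hasFDerivAt j x
  have h3 : HasFDerivAt (fun y : E n => 2 * A * α * ((c + ‖y‖ ^ 2) ^ (α - 1) * y j)) _ x :=
    (h1.mul h2).const_mul (2 * A * α)
  rw [h3.fderiv]
  simp [smul_smul, EuclideanSpace.inner_single_right]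
  ring

private lemma lap_eval {n : ℕ} (A c α : ℝ) (hc : 0 < c) (x : E n) :
    lap (fun z : E n => A * (c + ‖z‖ ^ 2) ^ α) x
      = (n : ℝ) * (2 * A * α * (c + ‖x‖ ^ 2) ^ (α - 1))
        + (4 * A * α * (α - 1) * (c + ‖x‖ ^ 2) ^ (α - 2)) * ‖x‖ ^ 2 := by
  unfold lap
  rw [Finset.sum_congr rfl (fun j _ => pd2_eval A c α hc x j)]
  rw [Finset.sum_add_distrib, Finset.sum_const, ← Finset.mul_sum]
  have hsum : ∑ j : Fin n, (x j) ^ 2 = ‖x‖ ^ 2 := by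
    rw [EuclideanSpace.norm_eq, Real.sq_sqrt (by positivity)]
    simp [sq_abs]
  rw [hsum]
  simp [nsmul_eq_mul]

/-- `ψ₅(x,t) = A(b(T-t)+|x|²)^{1/(1+ν)}` is a supersolution of
`u_t = Δu - u^{-ν}` on `ℝⁿ × (0,T)`. -/
theorem psi5_supersolution (n : ℕ) (hn : 1 ≤ n) (ν T A b : ℝ)
    (hν : 0 < ν) (hT : 0 < T)
    (hA : 0 < A) (hA' : A < ((1 + ν) / (2 * n)) ^ (1 / (1 + ν)))
    (hb : b = (1 + ν) / A ^ (1 + ν) - 2 * n)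
    (ψ₅ : E n → ℝ → ℝ)
    (hψ₅ : ∀ (x : E n) (t : ℝ),
      ψ₅ x t = A * (b * (T - t) + ‖x‖ ^ 2) ^ (1 / (1 + ν))) :
    0 < b ∧
    ∀ (x : E n), ∀ t ∈ Ioo (0 : ℝ) T,
      lap (fun y => ψ₅ y t) x - ψ₅ x t ^ (-ν) - deriv (ψ₅ x) t ≤ 0 := by
  have hν1 : (0 : ℝ) < 1 + ν := by linarith
  have hn' : (0 : ℝ) < (n : ℝ) := by exact_mod_cast hn
  set α := 1 / (1 + ν) with hα
  have hα0 : 0 < α := by positivity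
  have hα1 : α < 1 := by
    rw [hα, div_lt_one hν1]; linarith
  have hαν : α * (1 + ν) = 1 := by
    rw [hα]; field_simp
  have hApow : (0 : ℝ) < A ^ (1 + ν) := Real.rpow_pos_of_pos hA _
  have hR : (0 : ℝ) < (1 + ν) / (2 * n) := by positivity
  have hlt : A ^ (1 + ν) < (1 + ν) / (2 * n) := by
    have h := Real.rpow_lt_rpow hA.le hA' hν1
    rwa [← Real.rpow_mul hR.le, hαν, Real.rpow_one] at h
  have hbpos : 0 < b := by
    rw [hb]
    have h2 : 2 * (n : ℝ) < (1 + ν) / A ^ (1 + ν) := by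
      rw [lt_div_iff₀ hApow]
      have := (lt_div_iff₀ (by positivity : (0 : ℝ) < 2 * n)).mp hlt
      linarith
    linarith
  refine ⟨hbpos, fun x t ht => ?_⟩
  obtain ⟨ht0, htT⟩ := ht
  have hcpos : 0 < b * (T - t) := mul_pos hbpos (by linarith)
  have hwpos : (0 : ℝ) < b * (T - t) + ‖x‖ ^ 2 := by positivity
  -- the three pieces
  have hfun1 : (fun y => ψ₅ y t) = fun y : E n => A * (b * (T - t) + ‖y‖ ^ 2) ^ α :=
    funext fun y => hψ₅ y t
  have hfun2 : ψ₅ x = fun s : ℝ => A * (b * (T - s) + ‖x‖ ^ 2) ^ α :=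
    funext fun s => hψ₅ x s
  have hder : deriv (ψ₅ x) t = A * ((b * -1) * α * (b * (T - t) + ‖x‖ ^ 2) ^ (α - 1)) := by
    have h1 : HasDerivAt (fun s : ℝ => b * (T - s) + ‖x‖ ^ 2) (b * -1) t :=
      (((hasDerivAt_id t).const_sub T).const_mul b).add_const (‖x‖ ^ 2)
    have h2 := (h1.rpow_const (p := α) (Or.inl hwpos.ne')).const_mul A
    rw [hfun2]
    exact h2.deriv
  have hpsi : ψ₅ x t ^ (-ν) = A ^ (-ν) * (b * (T - t) + ‖x‖ ^ 2) ^ (α - 1) := by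
    rw [hψ₅ x t,
      Real.mul_rpow hA.le (Real.rpow_pos_of_pos hwpos α).le,
      ← Real.rpow_mul hwpos.le]
    congr 2
    rw [hα]
    field_simp
    ring
  have hAν : A * α * (2 * (n : ℝ) + b) = A ^ (-ν) := by
    rw [hb, show (-ν) = 1 - (1 + ν) by ring, Real.rpow_sub hA, Real.rpow_one]
    have h : A * α * (2 * (n : ℝ) + ((1 + ν) / A ^ (1 + ν) - 2 * n))
        = A * (α * (1 + ν)) / A ^ (1 + ν) := by
      field_simp; ring
    rw [h, hαν, mul_one]
  rw [hfun1, lap_eval A (b * (T - t)) α hcpos x, hder, hpsi, ← hAν]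
  have hw2 : (0 : ℝ) ≤ (b * (T - t) + ‖x‖ ^ 2) ^ (α - 2) := Real.rpow_nonneg hwpos.le _
  have hx2 : (0 : ℝ) ≤ ‖x‖ ^ 2 := by positivity
  have hco : 4 * A * α * (α - 1) ≤ 0 := by nlinarith [mul_pos hA hα0, hα1]
  nlinarith [mul_nonneg hw2 hx2, mul_nonpos_of_nonpos_of_nonneg hco (mul_nonneg hw2 hx2)]
end
end
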